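/- K-th root scaling of the probabilistic spectral radius under step lift: Let A_1,…,A_M ∈ ℝ^{n×n}, G a stochastic graph, ξ a distribution on S, K ≥ 1, and define ρ_0(A,G,ξ) := limsup_{k→∞} (∏_{î∈⟨M⟩^k} ‖A(î)‖^{μ_{G,ξ}(î)})^{1/k}. If all matrices A_i are invertible (so all norms are positive), then ρ_0(A^K, G^K, ξ) = ρ_0(A, G, ξ)^K, where A^K := {A(î) : î ∈ ⟨M⟩^K} indexed by words of length K and G^K is the K-step lift. -/

import Mathlib

/-- `ℙ_{G,ξ}(s, w)`. -/
noncomputable def PP {S ι : Type*} [Fintype S] (p : S → S → ι → ℝ) (ξ : S → ℝ) :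
    (k : ℕ) → S → (Fin k → ι) → ℝ
  | 0, s, _ => ξ s
  | k + 1, s, w => ∑ a, PP p ξ k a (Fin.init w) * p a s (w (Fin.last k))

/-- The induced word distribution `μ_{G,ξ}`. -/
noncomputable def muWord {S ι : Type*} [Fintype S] (p : S → S → ι → ℝ) (ξ : S → ℝ)
    (k : ℕ) (w : Fin k → ι) : ℝ := ∑ s : S, PP p ξ k s w

/-- K-step lift weights. -/
noncomputable def pK {S ι : Type*} [Fintype S] [DecidableEq S] (p : S → S → ι → ℝ) :
    (K : ℕ) → S → S → (Fin K → ι) → ℝ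
  | 0, a, b, _ => if a = b then 1 else 0
  | K + 1, a, b, w => ∑ c, pK p K a c (Fin.init w) * p c b (w (Fin.last K))

/-- `A(w) = A_{w_{k-1}} ⋯ A_{w_0}`. -/
noncomputable def Aw {ι : Type*} {n : ℕ} (A : ι → Matrix (Fin n) (Fin n) ℝ) :
    (k : ℕ) → (Fin k → ι) → Matrix (Fin n) (Fin n) ℝ
  | 0, _ => 1
  | k + 1, w => A (w (Fin.last k)) * Aw A k (Fin.init w)

/-- The operator norm of a matrix induced by the Euclidean norm
(a submultiplicative matrix norm). -/
noncomputable def euclOpNorm {n : ℕ} (B : Matrix (Fin n) (Fin n) ℝ) : ℝ :=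
  ‖(Matrix.toEuclideanLin B).toContinuousLinearMap‖

/-- The probabilistic spectral radius
`ρ₀(A,G,ξ) = limsup_k (∏_{w ∈ ι^k} ‖A(w)‖^{μ_{G,ξ}(w)})^{1/k}`. -/
noncomputable def rho0 {S ι : Type*} [Fintype S] [Fintype ι] {n : ℕ}
    (A : ι → Matrix (Fin n) (Fin n) ℝ) (p : S → S → ι → ℝ) (ξ : S → ℝ) : ℝ :=
  Filter.atTop.limsup fun k : ℕ =>
    (∏ w : Fin k → ι, euclOpNorm (Aw A k w) ^ muWord p ξ k w) ^ ((1 : ℝ) / k)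

/-! ### Auxiliary lemmas -/

set_option linter.unusedSectionVars false

section NormLemmas
variable {n : ℕ}

lemma euclOpNorm_nonneg (B : Matrix (Fin n) (Fin n) ℝ) : 0 ≤ euclOpNorm B :=
  norm_nonneg _

lemma euclOpNorm_mul_le (B C : Matrix (Fin n) (Fin n) ℝ) :
    euclOpNorm (B * C) ≤ euclOpNorm B * euclOpNorm C := by
  have h : (Matrix.toEuclideanLin (B * C)).toContinuousLinearMap
      = (Matrix.toEuclideanLin B).toContinuousLinearMap.comp
        (Matrix.toEuclideanLin C).toContinuousLinearMap := by
    ext v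
    simp [Matrix.toEuclideanLin_apply, Matrix.mulVec_mulVec]
  rw [euclOpNorm, h]
  exact ContinuousLinearMap.opNorm_comp_le _ _

lemma euclOpNorm_pos (hn : 0 < n) {B : Matrix (Fin n) (Fin n) ℝ} (h : IsUnit B) :
    0 < euclOpNorm B := by
  haveI : Nonempty (Fin n) := ⟨⟨0, hn⟩⟩
  rcases eq_or_lt_of_le (euclOpNorm_nonneg B) with h0 | h0
  · exfalso
    have hz : (Matrix.toEuclideanLin B).toContinuousLinearMap = 0 :=
      (ContinuousLinearMap.opNorm_zero_iff _).mp h0.symm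
    have hB : B = 0 := by
      have h2 : Matrix.toEuclideanLin B = 0 :=
        (map_eq_zero_iff _ LinearMap.toContinuousLinearMap.injective).mp hz
      exact (map_eq_zero_iff _ (Matrix.toEuclideanLin (𝕜 := ℝ)).injective).mp h2
    exact h.ne_zero hB
  · exact h0

lemma euclOpNorm_zero_of_dim_zero (hn : n = 0) (B : Matrix (Fin n) (Fin n) ℝ) :
    euclOpNorm B = 0 := by
  subst hn
  have : (Matrix.toEuclideanLin B).toContinuousLinearMap = 0 := by
    ext v i
    exact i.elim0
  rw [euclOpNorm, this, norm_zero]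

/-- Pointwise log-ratio bound for multiplication by an invertible matrix. -/
lemma log_norm_mul_sub_le (hn : 0 < n) {Ai B : Matrix (Fin n) (Fin n) ℝ}
    (hAi : IsUnit Ai) (hB : IsUnit B) :
    |Real.log (euclOpNorm (Ai * B)) - Real.log (euclOpNorm B)|
      ≤ |Real.log (euclOpNorm Ai)| + |Real.log (euclOpNorm Ai⁻¹)| := by
  have hdet : IsUnit Ai.det := (Matrix.isUnit_iff_isUnit_det _).mp hAi
  have hAinv : IsUnit Ai⁻¹ := Matrix.isUnit_nonsing_inv_iff.mpr hAi
  have hx : 0 < euclOpNorm (Ai * B) := euclOpNorm_pos hn (hAi.mul hB)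
  have hy : 0 < euclOpNorm B := euclOpNorm_pos hn hB
  have ha : 0 < euclOpNorm Ai := euclOpNorm_pos hn hAi
  have hainv : 0 < euclOpNorm Ai⁻¹ := euclOpNorm_pos hn hAinv
  have up : Real.log (euclOpNorm (Ai * B))
      ≤ Real.log (euclOpNorm Ai) + Real.log (euclOpNorm B) := by
    rw [← Real.log_mul (ne_of_gt ha) (ne_of_gt hy)]
    exact Real.log_le_log hx (euclOpNorm_mul_le Ai B)
  have low : Real.log (euclOpNorm B)
      ≤ Real.log (euclOpNorm Ai⁻¹) + Real.log (euclOpNorm (Ai * B)) := by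
    rw [← Real.log_mul (ne_of_gt hainv) (ne_of_gt hx)]
    apply Real.log_le_log hy
    have hfac : B = Ai⁻¹ * (Ai * B) := by
      rw [← mul_assoc, Matrix.nonsing_inv_mul Ai hdet, one_mul]
    calc euclOpNorm B = euclOpNorm (Ai⁻¹ * (Ai * B)) := by rw [← hfac]
      _ ≤ euclOpNorm Ai⁻¹ * euclOpNorm (Ai * B) := euclOpNorm_mul_le _ _
  rw [abs_le]
  constructor
  · have := le_abs_self (Real.log (euclOpNorm Ai⁻¹))
    have := abs_nonneg (Real.log (euclOpNorm Ai))
    linarith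
  · have := le_abs_self (Real.log (euclOpNorm Ai))
    have := abs_nonneg (Real.log (euclOpNorm Ai⁻¹))
    linarith

end NormLemmas

section split
variable {ι : Type*} {n : ℕ}

lemma Aw_split (A : ι → Matrix (Fin n) (Fin n) ℝ) (m : ℕ) :
    ∀ (l : ℕ) (u : Fin (m + l) → ι),
      Aw A (m + l) u
        = Aw A l (fun j => u (Fin.natAdd m j)) * Aw A m (fun j => u (Fin.castAdd l j))
  | 0, u => by
      show Aw A m u = 1 * Aw A m (fun j => u (Fin.castAdd 0 j))
      rw [one_mul]; rfl
  | l + 1, u => by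
      show A (u (Fin.last (m + l))) * Aw A (m + l) (Fin.init u) = _
      rw [Aw_split A m l (Fin.init u)]
      exact (mul_assoc _ _ _).symm

lemma PP_split {S : Type*} [Fintype S] [DecidableEq S] (p : S → S → ι → ℝ) (ξ : S → ℝ) (m : ℕ) :
    ∀ (l : ℕ) (s : S) (u : Fin (m + l) → ι),
      PP p ξ (m + l) s u
        = ∑ a, PP p ξ m a (fun j => u (Fin.castAdd l j))
            * pK p l a s (fun j => u (Fin.natAdd m j))
  | 0, s, u => by
      show PP p ξ m s u = ∑ a, PP p ξ m a _ * (if a = s then 1 else 0)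
      simp only [mul_ite, mul_one, mul_zero, Finset.sum_ite_eq', Finset.mem_univ, if_true]
      rfl
  | l + 1, s, u => by
      have H : ∀ a, PP p ξ (m+l) a (Fin.init u)
          = ∑ b, PP p ξ m b (fun j => Fin.init u (Fin.castAdd l j))
              * pK p l b a (fun j => Fin.init u (Fin.natAdd m j)) :=
        fun a => PP_split p ξ m l a (Fin.init u)
      show (∑ a, PP p ξ (m + l) a (Fin.init u) * p a s (u (Fin.last (m + l)))) = _
      calc (∑ a, PP p ξ (m + l) a (Fin.init u) * p a s (u (Fin.last (m + l))))
          = ∑ a, ∑ b, PP p ξ m b (fun j => Fin.init u (Fin.castAdd l j))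
              * (pK p l b a (fun j => Fin.init u (Fin.natAdd m j))
                  * p a s (u (Fin.last (m + l)))) := by
            simp only [H, Finset.sum_mul, mul_assoc]
        _ = ∑ b, PP p ξ m b (fun j => Fin.init u (Fin.castAdd l j))
              * ∑ a, pK p l b a (fun j => Fin.init u (Fin.natAdd m j))
                  * p a s (u (Fin.last (m + l))) := by
            rw [Finset.sum_comm]; simp only [Finset.mul_sum]
        _ = _ := rfl
end split

section lift
variable {ι : Type*} {n : ℕ}

/-- The flattening equivalence between words of length `k` over blocks of length `K`
and words of length `K*k`. -/
def eK (K k : ℕ) (hK : 0 < K) : (Fin k → Fin K → ι) ≃ (Fin (K * k) → ι) where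
  toFun W i := W ⟨i.val / K, by
      have := i.2
      exact (Nat.div_lt_iff_lt_mul hK).mpr (Nat.mul_comm K k ▸ this)⟩
    ⟨i.val % K, Nat.mod_lt _ hK⟩
  invFun u q r := u ⟨K * q.val + r.val, by
      calc K * q.val + r.val < K * q.val + K := Nat.add_lt_add_left r.2 _
        _ = K * (q.val + 1) := by ring
        _ ≤ K * k := Nat.mul_le_mul_left K q.2⟩
  left_inv W := by
    funext q r
    simp only []
    congr 1
    · exact Fin.ext (by simp [Nat.mul_add_div hK, Nat.div_eq_of_lt r.2])
    · exact Fin.ext (by simp [Nat.mul_add_mod, Nat.mod_eq_of_lt r.2])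
  right_inv u := by
    funext i
    simp only []
    exact congrArg u (Fin.ext (Nat.div_add_mod i.val K))

lemma eK_castAdd {K k : ℕ} (hK : 0 < K) (W : Fin (k+1) → Fin K → ι) :
    (fun j : Fin (K * k) => eK K (k+1) hK W (Fin.castAdd K j)) = eK K k hK (Fin.init W) :=
  rfl

lemma eK_natAdd {K k : ℕ} (hK : 0 < K) (W : Fin (k+1) → Fin K → ι) :
    (fun r : Fin K => eK K (k+1) hK W (Fin.natAdd (K * k) r)) = W (Fin.last k) := by
  funext r
  show W ⟨(K * k + r.val) / K, _⟩ ⟨(K * k + r.val) % K, _⟩ = W (Fin.last k) r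
  congr 1
  · exact Fin.ext (by simp [Nat.mul_add_div hK, Nat.div_eq_of_lt r.2])
  · exact Fin.ext (by simp [Nat.mul_add_mod, Nat.mod_eq_of_lt r.2])

lemma Aw_lift (A : ι → Matrix (Fin n) (Fin n) ℝ) {K : ℕ} (hK : 0 < K) :
    ∀ (k : ℕ) (W : Fin k → Fin K → ι),
      Aw (fun v => Aw A K v) k W = Aw A (K * k) (eK K k hK W)
  | 0, W => rfl
  | k + 1, W => by
      show Aw A K (W (Fin.last k)) * Aw (fun v => Aw A K v) k (Fin.init W) = _
      rw [Aw_lift A hK k (Fin.init W), ← eK_castAdd hK W, ← eK_natAdd hK W]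
      exact (Aw_split A (K * k) K (eK K (k+1) hK W)).symm

lemma PP_lift {S : Type*} [Fintype S] [DecidableEq S] (p : S → S → ι → ℝ) (ξ : S → ℝ)
    {K : ℕ} (hK : 0 < K) :
    ∀ (k : ℕ) (s : S) (W : Fin k → Fin K → ι),
      PP (pK p K) ξ k s W = PP p ξ (K * k) s (eK K k hK W)
  | 0, s, W => rfl
  | k + 1, s, W => by
      show (∑ a, PP (pK p K) ξ k a (Fin.init W) * pK p K a s (W (Fin.last k))) = _
      have H : ∀ a, PP (pK p K) ξ k a (Fin.init W)
          = PP p ξ (K * k) a (eK K k hK (Fin.init W)) :=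
        fun a => PP_lift p ξ hK k a (Fin.init W)
      simp only [H, ← eK_castAdd hK W, ← eK_natAdd hK W]
      exact (PP_split p ξ (K * k) K s (eK K (k+1) hK W)).symm
end lift

section mu
variable {S ι : Type*} [Fintype S] [Fintype ι] {n : ℕ}
variable (p : S → S → ι → ℝ) (ξ : S → ℝ)

/-- `Fin.snoc` as an equivalence. -/
def snocEquiv (ι : Type*) (k : ℕ) : ((Fin k → ι) × ι) ≃ (Fin (k+1) → ι) where
  toFun x := Fin.snoc x.1 x.2
  invFun w := (Fin.init w, w (Fin.last k))
  left_inv x := by simp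
  right_inv w := Fin.snoc_init_self w

lemma Aw_snoc (A : ι → Matrix (Fin n) (Fin n) ℝ) (k : ℕ) (w : Fin k → ι) (i : ι) :
    Aw A (k+1) (Fin.snoc w i) = A i * Aw A k w := by
  show A ((Fin.snoc w i : Fin (k+1) → ι) (Fin.last k))
      * Aw A k (Fin.init (Fin.snoc w i : Fin (k+1) → ι)) = _
  rw [Fin.snoc_last, Fin.init_snoc]

lemma PP_snoc (k : ℕ) (s : S) (w : Fin k → ι) (i : ι) :
    PP p ξ (k+1) s (Fin.snoc w i) = ∑ a, PP p ξ k a w * p a s i := by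
  show (∑ a, PP p ξ k a (Fin.init (Fin.snoc w i : Fin (k+1) → ι))
      * p a s ((Fin.snoc w i : Fin (k+1) → ι) (Fin.last k))) = _
  rw [Fin.snoc_last, Fin.init_snoc]

lemma PP_nonneg (hξ0 : ∀ s, 0 ≤ ξ s) (hp : ∀ a b i, 0 ≤ p a b i) :
    ∀ (k : ℕ) (s : S) (w : Fin k → ι), 0 ≤ PP p ξ k s w
  | 0, s, _ => hξ0 s
  | k + 1, s, w => Finset.sum_nonneg fun a _ =>
      mul_nonneg (PP_nonneg hξ0 hp k a (Fin.init w)) (hp a s (w (Fin.last k)))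

lemma muWord_nonneg (hξ0 : ∀ s, 0 ≤ ξ s) (hp : ∀ a b i, 0 ≤ p a b i)
    (k : ℕ) (w : Fin k → ι) : 0 ≤ muWord p ξ k w :=
  Finset.sum_nonneg fun s _ => PP_nonneg p ξ hξ0 hp k s w

lemma muWord_marginal (hstoch : ∀ a : S, ∑ b : S, ∑ i : ι, p a b i = 1)
    (k : ℕ) (w : Fin k → ι) :
    ∑ i : ι, muWord p ξ (k+1) (Fin.snoc w i) = muWord p ξ k w := by
  simp only [muWord, PP_snoc]
  calc ∑ i : ι, ∑ s : S, ∑ a : S, PP p ξ k a w * p a s i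
      = ∑ s : S, ∑ i : ι, ∑ a : S, PP p ξ k a w * p a s i := Finset.sum_comm
    _ = ∑ s : S, ∑ a : S, ∑ i : ι, PP p ξ k a w * p a s i :=
        Finset.sum_congr rfl fun s _ => Finset.sum_comm
    _ = ∑ a : S, ∑ s : S, ∑ i : ι, PP p ξ k a w * p a s i := Finset.sum_comm
    _ = ∑ a : S, PP p ξ k a w * ∑ s : S, ∑ i : ι, p a s i := by
        simp only [Finset.mul_sum]
    _ = ∑ a : S, PP p ξ k a w := by
        refine Finset.sum_congr rfl fun a _ => ?_
        rw [hstoch a, mul_one]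
    _ = muWord p ξ k w := rfl

lemma muWord_total (hξ1 : ∑ s : S, ξ s = 1)
    (hstoch : ∀ a : S, ∑ b : S, ∑ i : ι, p a b i = 1) :
    ∀ k : ℕ, ∑ w : Fin k → ι, muWord p ξ k w = 1
  | 0 => by
      rw [Fintype.sum_unique (muWord p ξ 0)]
      exact hξ1
  | k + 1 => by
      rw [← Fintype.sum_equiv (snocEquiv ι k) _ (muWord p ξ (k+1)) (fun x => rfl)]
      rw [Fintype.sum_prod_type]
      calc ∑ w : Fin k → ι, ∑ i : ι, muWord p ξ (k+1) (Fin.snoc w i)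
          = ∑ w : Fin k → ι, muWord p ξ k w :=
            Finset.sum_congr rfl fun w _ => muWord_marginal p ξ hstoch k w
        _ = 1 := muWord_total hξ1 hstoch k
end mu

/-! ### Analytic lemmas -/

open Filter

lemma my_le_of_forall_pos_le_add {a b : ℝ} (h : ∀ ε : ℝ, 0 < ε → a ≤ b + ε) : a ≤ b := by
  by_contra hc
  push_neg at hc
  have := h ((a - b) / 2) (by linarith)
  linarith

lemma abs_sub_le_of_abs_diff (a : ℕ → ℝ) (L : ℝ) (hL : ∀ k, |a (k+1) - a k| ≤ L) :
    ∀ (d m : ℕ), |a (m + d) - a m| ≤ L * d := by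
  intro d
  induction d with
  | zero => intro m; simp
  | succ d ih =>
    intro m
    have h1 := hL (m + d)
    have h2 := ih m
    have h3 : |a (m + (d+1)) - a m| ≤ |a (m + d + 1) - a (m+d)| + |a (m + d) - a m| := by
      rw [show m + (d+1) = m + d + 1 from rfl]
      exact abs_sub_le _ _ _
    push_cast
    nlinarith [abs_nonneg (a (m+d+1) - a (m+d))]

lemma abs_sub_cast_le (a : ℕ → ℝ) (L : ℝ) (hL : ∀ k, |a (k+1) - a k| ≤ L) :
    ∀ m j : ℕ, m ≤ j → |a j - a m| ≤ L * ((j : ℝ) - m) := by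
  intro m j hmj
  obtain ⟨d, rfl⟩ := Nat.exists_eq_add_of_le hmj
  have := abs_sub_le_of_abs_diff a L hL d m
  push_cast
  convert this using 2
  ring

lemma udiv_abs_bound (a : ℕ → ℝ) (L : ℝ) (hL : ∀ k, |a (k+1) - a k| ≤ L) (m : ℕ) :
    |a m / m| ≤ |a 0| + L := by
  have hL0 : 0 ≤ L := le_trans (abs_nonneg _) (hL 0)
  have hgrow : |a m| ≤ |a 0| + L * m := by
    have := abs_sub_cast_le a L hL 0 m (Nat.zero_le m)
    have h2 : |a m| - |a 0| ≤ |a m - a 0| := abs_sub_abs_le_abs_sub _ _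
    simp only [Nat.cast_zero, sub_zero] at this
    linarith
  rcases Nat.eq_zero_or_pos m with rfl | hm
  · simp
    positivity
  · have hm1 : (1 : ℝ) ≤ m := by exact_mod_cast hm
    have hmpos : (0:ℝ) < m := by linarith
    rw [abs_div, abs_of_pos hmpos, div_le_iff₀ hmpos]
    nlinarith [abs_nonneg (a 0)]

lemma limsup_comp_le (u : ℕ → ℝ) (g : ℕ → ℕ) (hg : Tendsto g atTop atTop)
    (B : ℝ) (hu : ∀ m, |u m| ≤ B) :
    atTop.limsup (fun k => u (g k)) ≤ atTop.limsup u := by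
  have key : atTop.limsup (fun k => u (g k)) = Filter.limsup u (Filter.map g atTop) := by
    rw [Filter.limsup, Filter.limsup, Filter.map_map]
    rfl
  rw [key]
  refine Filter.limsup_le_limsup_of_le hg ?_ ?_
  · show (Filter.map u (Filter.map g atTop)).IsCobounded _
    rw [Filter.map_map]
    exact ((Filter.isBoundedUnder_of ⟨-B, fun m => (abs_le.mp (hu (g m))).1⟩ :
      atTop.IsBoundedUnder (· ≥ ·) (u ∘ g)).isCoboundedUnder_le :
      atTop.IsCoboundedUnder (· ≤ ·) (u ∘ g))
  · exact Filter.isBoundedUnder_of ⟨B, fun m => (abs_le.mp (hu m)).2⟩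

lemma limsup_subseq_eq (a : ℕ → ℝ) (L : ℝ) (hL : ∀ k, |a (k+1) - a k| ≤ L)
    (K : ℕ) (hK : 1 ≤ K) :
    Filter.atTop.limsup (fun k : ℕ => a (K*k) / ((K*k : ℕ) : ℝ))
      = Filter.atTop.limsup (fun m : ℕ => a m / m) := by
  have hKpos : 0 < K := hK
  have hL0 : 0 ≤ L := le_trans (abs_nonneg _) (hL 0)
  set u : ℕ → ℝ := fun m => a m / m with hu
  set v : ℕ → ℝ := fun k => u (K * k) with hv
  have habs := abs_sub_cast_le a L hL
  set B0 : ℝ := |a 0| + L with hB0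
  have hB0nn : 0 ≤ B0 := by positivity
  have hubd : ∀ m : ℕ, |u m| ≤ B0 := udiv_abs_bound a L hL
  have hvbd : ∀ k : ℕ, |v k| ≤ B0 := fun k => hubd (K * k)
  have bddf : ∀ (f : ℕ → ℝ), (∀ m, |f m| ≤ B0) → atTop.IsBoundedUnder (· ≤ ·) f :=
    fun f hf => Filter.isBoundedUnder_of ⟨B0, fun m => (abs_le.mp (hf m)).2⟩
  have cobddf : ∀ (f : ℕ → ℝ), (∀ m, |f m| ≤ B0) → atTop.IsCoboundedUnder (· ≤ ·) f :=
    fun f hf => (Filter.isBoundedUnder_of ⟨-B0, fun m => (abs_le.mp (hf m)).1⟩ :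
      atTop.IsBoundedUnder (· ≥ ·) f).isCoboundedUnder_le
  apply le_antisymm
  · exact limsup_comp_le u (fun k => K * k)
      (tendsto_atTop_mono (fun k => Nat.le_mul_of_pos_left k hKpos) tendsto_id) B0 hubd
  · set c : ℕ → ℕ := fun m => (m + K - 1) / K with hc
    set D : ℝ := L * K + B0 * K with hD
    have hDnn : 0 ≤ D := by positivity
    have hcfacts : ∀ m : ℕ, 1 ≤ m → m ≤ K * c m ∧ K * c m ≤ m + K - 1 := by
      intro m hm
      have hd := Nat.div_add_mod (m + K - 1) K
      have hmod := Nat.mod_lt (m + K - 1) hKpos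
      rw [hc]
      set t := K * ((m + K - 1) / K) with ht
      set r := (m + K - 1) % K with hr
      omega
    have hkey : ∀ m : ℕ, 1 ≤ m → u m ≤ v (c m) + D / m := by
      intro m hm
      obtain ⟨h1, h2⟩ := hcfacts m hm
      have hKk1 : 1 ≤ K * c m := le_trans hm h1
      have hR1 : (1:ℝ) ≤ m := by exact_mod_cast hm
      have hRm : (0:ℝ) < m := by linarith
      have hRKk : (0:ℝ) < ((K * c m : ℕ) : ℝ) := by exact_mod_cast hKk1
      have hle : (m:ℝ) ≤ ((K * c m : ℕ) : ℝ) := by exact_mod_cast h1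
      have hle2 : ((K * c m : ℕ) : ℝ) ≤ (m:ℝ) + (K:ℝ) := by
        have h3 : K * c m ≤ m + K := by omega
        exact_mod_cast h3
      have hdiff := habs m (K * c m) h1
      have haKk : |a (K * c m)| ≤ B0 * ((K * c m : ℕ) : ℝ) := by
        have h4 := hubd (K * c m)
        rw [hu, abs_div, abs_of_pos hRKk, div_le_iff₀ hRKk] at h4
        exact h4
      set km : ℝ := ((K * c m : ℕ) : ℝ) with hkm
      set x : ℝ := a m
      set y : ℝ := a (K * c m)
      have e1 : x ≤ y + L * (km - m) := by
        have := abs_le.mp hdiff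
        linarith [this.1]
      have s1 : x * km ≤ y * m + D * km := by
        have t1 : km - (m:ℝ) ≤ K := by linarith
        have t1' : (0:ℝ) ≤ km - m := by linarith
        have t2 : y * (km - m) ≤ B0 * km * K := by
          have a1 : y * (km - m) ≤ |y| * (km - m) :=
            mul_le_mul_of_nonneg_right (le_abs_self y) t1'
          have a2 : |y| * (km - m) ≤ (B0 * km) * K :=
            mul_le_mul haKk t1 t1' (by positivity)
          linarith
        have t3 : L * (km - m) * km ≤ L * K * km := by
          apply mul_le_mul_of_nonneg_right _ hRKk.le
          exact mul_le_mul_of_nonneg_left t1 hL0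
        nlinarith [mul_le_mul_of_nonneg_right e1 hRKk.le]
      show x / m ≤ y / km + D / m
      rw [div_add_div _ _ (ne_of_gt hRKk) (ne_of_gt hRm), div_le_div_iff₀ hRm (by positivity)]
      calc x * (km * m) = (x * km) * m := by ring
        _ ≤ (y * m + D * km) * m := mul_le_mul_of_nonneg_right s1 hRm.le
        _ = (y * m + km * D) * m := by ring
    refine my_le_of_forall_pos_le_add ?_
    intro ε hε
    have hev : ∀ᶠ m : ℕ in atTop, D / m < ε :=
      (tendsto_const_div_atTop_nhds_zero_nat D).eventually_lt_const hε
    have hev2 : ∀ᶠ m : ℕ in atTop, u m ≤ v (c m) + ε := by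
      filter_upwards [hev, Filter.eventually_ge_atTop 1] with m hm1 hm2
      exact le_trans (hkey m hm2) (by linarith)
    have step1 : atTop.limsup u ≤ atTop.limsup (fun m => v (c m) + ε) :=
      Filter.limsup_le_limsup hev2 (cobddf u hubd)
        (Filter.isBoundedUnder_of ⟨B0 + ε, fun m => by
          have := (abs_le.mp (hvbd (c m))).2; linarith⟩)
    have step2 : atTop.limsup (fun m => v (c m) + ε) = atTop.limsup (fun m => v (c m)) + ε :=
      limsup_add_const atTop (fun m => v (c m)) ε
        (bddf _ (fun m => hvbd (c m))) (cobddf _ (fun m => hvbd (c m)))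
    have hcten : Tendsto c atTop atTop := by
      rw [tendsto_atTop_atTop]
      intro b
      refine ⟨K * b, fun m hm => ?_⟩
      rw [hc, Nat.le_div_iff_mul_le hKpos]
      calc b * K = K * b := Nat.mul_comm b K
        _ ≤ m := hm
        _ ≤ m + K - 1 := by omega
    have step3 : atTop.limsup (fun m => v (c m)) ≤ atTop.limsup v :=
      limsup_comp_le v c hcten B0 hvbd
    linarith

/-! ### Main theorem -/

/-- K-th root scaling of the probabilistic spectral radius under
the K-step lift: if all the matrices are invertible, then
`ρ₀(A^K, G^K, ξ) = ρ₀(A, G, ξ)^K`. -/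
theorem rho0_step_lift_pow
    {S : Type*} [Fintype S] [DecidableEq S] (M n : ℕ)
    (A : Fin M → Matrix (Fin n) (Fin n) ℝ)
    (hinv : ∀ i, IsUnit (A i))
    (p : S → S → Fin M → ℝ)
    (hnonneg : ∀ a b i, 0 ≤ p a b i)
    (hstoch : ∀ a : S, ∑ b : S, ∑ i : Fin M, p a b i = 1)
    (ξ : S → ℝ) (hξ0 : ∀ s, 0 ≤ ξ s) (hξ1 : ∑ s : S, ξ s = 1)
    (K : ℕ) (hK : 1 ≤ K) :
    rho0 (fun w : Fin K → Fin M => Aw A K w) (pK p K) ξ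
      = rho0 A p ξ ^ K := by
  classical
  have hKpos : 0 < K := hK
  haveI hS : Nonempty S := by
    by_contra h
    rw [not_nonempty_iff] at h
    simp at hξ1
  obtain ⟨s0⟩ := hS
  set F : ℕ → ℝ := fun k => ∏ w : Fin k → Fin M, euclOpNorm (Aw A k w) ^ muWord p ξ k w with hF
  have hlift : ∀ k : ℕ, (∏ W : Fin k → (Fin K → Fin M),
      euclOpNorm (Aw (fun w : Fin K → Fin M => Aw A K w) k W) ^ muWord (pK p K) ξ k W)
      = F (K * k) := by
    intro k
    rw [hF]
    refine Fintype.prod_equiv (eK K k hKpos) _ _ fun W => ?_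
    rw [Aw_lift A hKpos k W]
    congr 1
    rw [muWord, muWord]
    exact Finset.sum_congr rfl fun s _ => PP_lift p ξ hKpos k s W
  have hrhoL : rho0 (fun w : Fin K → Fin M => Aw A K w) (pK p K) ξ
      = Filter.atTop.limsup (fun k : ℕ => F (K * k) ^ ((1:ℝ)/k)) := by
    rw [rho0]
    congr 1
    funext k
    rw [hlift k]
  have hrhoR : rho0 A p ξ = Filter.atTop.limsup (fun k : ℕ => F k ^ ((1:ℝ)/k)) := rfl
  rcases Nat.eq_zero_or_pos n with hn0 | hn
  · -- degenerate case `n = 0`: all norms vanish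
    have hF0 : ∀ m : ℕ, 1 ≤ m → F m = 0 := by
      intro m hm
      obtain ⟨w0, hw0⟩ : ∃ w : Fin m → Fin M, muWord p ξ m w ≠ 0 := by
        by_contra h
        push_neg at h
        have := muWord_total p ξ hξ1 hstoch m
        simp only [h, Finset.sum_const_zero] at this
        exact one_ne_zero this.symm
      refine Finset.prod_eq_zero (Finset.mem_univ w0) ?_
      rw [euclOpNorm_zero_of_dim_zero hn0, Real.zero_rpow hw0]
    have hzL : Filter.atTop.limsup (fun k : ℕ => F (K * k) ^ ((1:ℝ)/k)) = 0 := by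
      have hev : ∀ᶠ k : ℕ in atTop, F (K * k) ^ ((1:ℝ)/k) = (fun _ : ℕ => (0:ℝ)) k := by
        filter_upwards [Filter.eventually_ge_atTop 1] with k hk
        have : 1 ≤ K * k := Nat.one_le_iff_ne_zero.mpr (by positivity)
        rw [hF0 _ this, Real.zero_rpow (by
          have : (k:ℝ) ≠ 0 := Nat.cast_ne_zero.mpr (by omega)
          exact one_div_ne_zero this)]
      rw [Filter.limsup_congr hev, Filter.limsup_const]
    have hzR : Filter.atTop.limsup (fun k : ℕ => F k ^ ((1:ℝ)/k)) = 0 := by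
      have hev : ∀ᶠ k : ℕ in atTop, F k ^ ((1:ℝ)/k) = (fun _ : ℕ => (0:ℝ)) k := by
        filter_upwards [Filter.eventually_ge_atTop 1] with k hk
        rw [hF0 _ hk, Real.zero_rpow (by
          have : (k:ℝ) ≠ 0 := Nat.cast_ne_zero.mpr (by omega)
          exact one_div_ne_zero this)]
      rw [Filter.limsup_congr hev, Filter.limsup_const]
    rw [hrhoL, hrhoR, hzL, hzR, zero_pow (by omega : K ≠ 0)]
  · -- main case `n ≥ 1`
    haveI hM : Nonempty (Fin M) := by
      rcases Nat.eq_zero_or_pos M with hM0 | hM0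
      · exfalso; subst hM0; simpa using hstoch s0
      · exact ⟨⟨0, hM0⟩⟩
    have hAwU : ∀ (k : ℕ) (w : Fin k → Fin M), IsUnit (Aw A k w) := by
      intro k
      induction k with
      | zero => intro w; exact isUnit_one
      | succ k ih => intro w; exact (hinv _).mul (ih (Fin.init w))
    have hFpos : ∀ m : ℕ, 0 < F m := by
      intro m
      refine Finset.prod_pos fun w _ => ?_
      exact Real.rpow_pos_of_pos (euclOpNorm_pos hn (hAwU m w)) _
    set a : ℕ → ℝ := fun m => Real.log (F m) with ha
    set L : ℝ := ∑ i : Fin M,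
      (|Real.log (euclOpNorm (A i))| + |Real.log (euclOpNorm (A i)⁻¹)|) with hLdef
    have hLbd : ∀ i : Fin M,
        |Real.log (euclOpNorm (A i))| + |Real.log (euclOpNorm (A i)⁻¹)| ≤ L :=
      fun i => Finset.single_le_sum
        (f := fun j : Fin M => |Real.log (euclOpNorm (A j))| + |Real.log (euclOpNorm (A j)⁻¹)|)
        (fun j _ => by positivity) (Finset.mem_univ i)
    have hlog : ∀ m : ℕ, a m
        = ∑ w : Fin m → Fin M, muWord p ξ m w * Real.log (euclOpNorm (Aw A m w)) := by
      intro m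
      simp only [ha, hF]
      rw [Real.log_prod (fun w _ =>
        ne_of_gt (Real.rpow_pos_of_pos (euclOpNorm_pos hn (hAwU m w)) _))]
      exact Finset.sum_congr rfl fun w _ =>
        Real.log_rpow (euclOpNorm_pos hn (hAwU m w)) _
    have hdiffL : ∀ m : ℕ, |a (m+1) - a m| ≤ L := by
      intro m
      have e1 : a (m+1) = ∑ w : Fin m → Fin M, ∑ i : Fin M,
          muWord p ξ (m+1) (Fin.snoc w i) * Real.log (euclOpNorm (A i * Aw A m w)) := by
        rw [hlog (m+1),
          ← Fintype.sum_equiv (snocEquiv (Fin M) m)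
            (fun x => muWord p ξ (m+1) (Fin.snoc x.1 x.2)
              * Real.log (euclOpNorm (Aw A (m+1) (Fin.snoc x.1 x.2))))
            (fun w => muWord p ξ (m+1) w * Real.log (euclOpNorm (Aw A (m+1) w)))
            (fun x => rfl),
          Fintype.sum_prod_type]
        exact Finset.sum_congr rfl fun w _ => Finset.sum_congr rfl fun i _ => by
          rw [Aw_snoc]
      have e2 : a m = ∑ w : Fin m → Fin M, ∑ i : Fin M,
          muWord p ξ (m+1) (Fin.snoc w i) * Real.log (euclOpNorm (Aw A m w)) := by
        rw [hlog m]
        refine Finset.sum_congr rfl fun w _ => ?_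
        rw [← muWord_marginal p ξ hstoch m w, Finset.sum_mul]
      have e3 : ∑ w : Fin m → Fin M, ∑ i : Fin M, muWord p ξ (m+1) (Fin.snoc w i) = 1 := by
        have htot := muWord_total p ξ hξ1 hstoch (m+1)
        rw [← Fintype.sum_equiv (snocEquiv (Fin M) m)
          (fun x => muWord p ξ (m+1) (Fin.snoc x.1 x.2)) (muWord p ξ (m+1)) (fun x => rfl),
          Fintype.sum_prod_type] at htot
        exact htot
      rw [e1, e2, ← Finset.sum_sub_distrib]
      simp only [← Finset.sum_sub_distrib, ← mul_sub]
      calc |∑ w : Fin m → Fin M, ∑ i : Fin M, muWord p ξ (m+1) (Fin.snoc w i)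
            * (Real.log (euclOpNorm (A i * Aw A m w)) - Real.log (euclOpNorm (Aw A m w)))|
          ≤ ∑ w : Fin m → Fin M, ∑ i : Fin M, |muWord p ξ (m+1) (Fin.snoc w i)
            * (Real.log (euclOpNorm (A i * Aw A m w)) - Real.log (euclOpNorm (Aw A m w)))| := by
            refine le_trans (Finset.abs_sum_le_sum_abs _ _) ?_
            exact Finset.sum_le_sum fun w _ => Finset.abs_sum_le_sum_abs _ _
        _ ≤ ∑ w : Fin m → Fin M, ∑ i : Fin M, muWord p ξ (m+1) (Fin.snoc w i) * L := by
            refine Finset.sum_le_sum fun w _ => Finset.sum_le_sum fun i _ => ?_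
            rw [abs_mul, abs_of_nonneg (muWord_nonneg p ξ hξ0 hnonneg (m+1) _)]
            refine mul_le_mul_of_nonneg_left ?_ (muWord_nonneg p ξ hξ0 hnonneg (m+1) _)
            exact le_trans (log_norm_mul_sub_le hn (hinv i) (hAwU m w)) (hLbd i)
        _ = L := by
            simp only [← Finset.sum_mul]
            rw [e3, one_mul]
    have hFrep : ∀ m : ℕ, F m ^ ((1:ℝ)/m) = Real.exp (a m / m) := by
      intro m
      rw [Real.rpow_def_of_pos (hFpos m), mul_one_div]
    set u : ℕ → ℝ := fun m => a m / m with huu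
    set B0 : ℝ := |a 0| + L with hB0
    have hubd : ∀ m : ℕ, |u m| ≤ B0 := udiv_abs_bound a L hdiffL
    have hbdd : Filter.atTop.IsBoundedUnder (· ≤ ·) u :=
      Filter.isBoundedUnder_of ⟨B0, fun m => (abs_le.mp (hubd m)).2⟩
    have hcobdd : Filter.atTop.IsCoboundedUnder (· ≤ ·) u :=
      (Filter.isBoundedUnder_of ⟨-B0, fun m => (abs_le.mp (hubd m)).1⟩ :
        Filter.atTop.IsBoundedUnder (· ≥ ·) u).isCoboundedUnder_le
    set w : ℕ → ℝ := fun k => a (K*k) / ((K*k : ℕ) : ℝ) with hww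
    have hwbd : ∀ k : ℕ, |w k| ≤ B0 := fun k => hubd (K*k)
    have hwbdd : Filter.atTop.IsBoundedUnder (· ≤ ·) w :=
      Filter.isBoundedUnder_of ⟨B0, fun m => (abs_le.mp (hwbd m)).2⟩
    have hwcobdd : Filter.atTop.IsCoboundedUnder (· ≤ ·) w :=
      (Filter.isBoundedUnder_of ⟨-B0, fun m => (abs_le.mp (hwbd m)).1⟩ :
        Filter.atTop.IsBoundedUnder (· ≥ ·) w).isCoboundedUnder_le
    have h1 : rho0 A p ξ = Real.exp (Filter.atTop.limsup u) := by
      rw [hrhoR]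
      have hfun : (fun k : ℕ => F k ^ ((1:ℝ)/k)) = fun k => Real.exp (u k) :=
        funext fun k => hFrep k
      rw [hfun]
      exact (Real.exp_monotone.map_limsup_of_continuousAt u
        (Real.continuous_exp.continuousAt) hbdd hcobdd).symm
    have h2 : rho0 (fun w : Fin K → Fin M => Aw A K w) (pK p K) ξ
        = Real.exp ((K:ℝ) * Filter.atTop.limsup w) := by
      rw [hrhoL]
      have hfun : (fun k : ℕ => F (K * k) ^ ((1:ℝ)/k))
          = fun k => Real.exp ((K:ℝ) * w k) := by
        funext k
        rw [Real.rpow_def_of_pos (hFpos (K * k)), mul_one_div]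
        congr 1
        show a (K * k) / (k:ℝ) = (K:ℝ) * w k
        rcases Nat.eq_zero_or_pos k with rfl | hk
        · simp [hww]
        · have hkR : ((k:ℝ)) ≠ 0 := Nat.cast_ne_zero.mpr (by omega)
          have hKkR : (((K*k : ℕ)):ℝ) ≠ 0 := Nat.cast_ne_zero.mpr (by positivity)
          rw [hww]
          push_cast
          field_simp
      rw [hfun]
      have hmono : Monotone (fun x : ℝ => Real.exp ((K:ℝ) * x)) := by
        intro x y hxy
        exact Real.exp_le_exp.mpr (mul_le_mul_of_nonneg_left hxy (by positivity))
      have hcont : ContinuousAt (fun x : ℝ => Real.exp ((K:ℝ) * x))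
          (Filter.atTop.limsup w) :=
        (Real.continuous_exp.comp (continuous_const.mul continuous_id)).continuousAt
      exact (hmono.map_limsup_of_continuousAt w hcont hwbdd hwcobdd).symm
    rw [h1, h2]
    rw [show Filter.atTop.limsup w = Filter.atTop.limsup u from
      limsup_subseq_eq a L hdiffL K hK]
    rw [← Real.exp_nat_mul]
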